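/- Suppose n is even and u, v ∈ ℝ. Set T̃ = −(V⊗V)T on ℂⁿ⊗ℂⁿ, and on (ℂⁿ)^{⊗2ℓ} define H'_ℓ = Σ_{x=−ℓ+1}^{ℓ−1} (u T̃_{x,x+1} + v Q_{x,x+1}) and H̃_ℓ = Σ_{x=−ℓ+1}^{ℓ−1} (u T_{x,x+1} + v P_{x,x+1}). Let W = W_{−ℓ+1} ⊗ W_{−ℓ+2} ⊗ … ⊗ W_ℓ be the staggered unitary with W_x = V for x ∈ {−ℓ+1, −ℓ+3, −ℓ+5, …} and W_x = I otherwise. Then W H'_ℓ W* = H̃_ℓ; in particular H'_ℓ and H̃_ℓ are unitarily equivalent and have the same spectrum. -/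

import Mathlib

open Matrix BigOperators Kronecker

/-- The transposition operator `T` on `ℂⁿ ⊗ ℂⁿ`. -/
noncomputable def transOp (n : ℕ) : Matrix (Fin n × Fin n) (Fin n × Fin n) ℂ :=
  fun p q => if p.1 = q.2 ∧ p.2 = q.1 then 1 else 0

/-- The vector `ψ = n^{-1/2} Σ_α |α⟩ ⊗ |α⟩`. -/
noncomputable def psiVec (n : ℕ) : Fin n × Fin n → ℂ :=
  fun p => if p.1 = p.2 then ((Real.sqrt n : ℂ))⁻¹ else 0

/-- The orthogonal projection `Q = |ψ⟩⟨ψ|`. -/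
noncomputable def QOp (n : ℕ) : Matrix (Fin n × Fin n) (Fin n × Fin n) ℂ :=
  fun p q => psiVec n p * (starRingEnd ℂ) (psiVec n q)

/-- The singlet vector `φ = n^{-1/2} Σ_α (-1)^{S-α} |α⟩ ⊗ |-α⟩`. -/
noncomputable def phiVec (n : ℕ) : Fin n × Fin n → ℂ :=
  fun p => if (p.1 : ℕ) + (p.2 : ℕ) = n - 1 then
    ((-1 : ℂ)) ^ ((n - 1) - (p.1 : ℕ)) * ((Real.sqrt n : ℂ))⁻¹
  else 0

/-- The orthogonal projection `P = |φ⟩⟨φ|`. -/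
noncomputable def Pproj (n : ℕ) : Matrix (Fin n × Fin n) (Fin n × Fin n) ℂ :=
  fun p q => phiVec n p * (starRingEnd ℂ) (phiVec n q)

/-- The operator `V |α⟩ = (-1)^{S-α} |-α⟩`. -/
noncomputable def Vop (n : ℕ) : Matrix (Fin n) (Fin n) ℂ :=
  fun i j => if (i : ℕ) + (j : ℕ) = n - 1 then ((-1 : ℂ)) ^ ((n - 1) - (j : ℕ)) else 0

/-- The modified transposition `T̃ = -(V ⊗ V) T`. -/
noncomputable def transOpTilde (n : ℕ) : Matrix (Fin n × Fin n) (Fin n × Fin n) ℂ :=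
  -((Vop n ⊗ₖ Vop n) * transOp n)

/-- A two-body operator `A` acting on the tensor factors at positions `p, q` of the chain. -/
noncomputable def bondOp (n ℓ : ℕ) (A : Matrix (Fin n × Fin n) (Fin n × Fin n) ℂ)
    (p q : Fin (2 * ℓ)) :
    Matrix ((Fin (2 * ℓ)) → Fin n) ((Fin (2 * ℓ)) → Fin n) ℂ :=
  fun σ τ => A (σ p, σ q) (τ p, τ q) *
    ∏ y ∈ (Finset.univ.erase p).erase q, (if σ y = τ y then (1 : ℂ) else 0)

/-- The chain Hamiltonian `Σ_{x=-ℓ+1}^{ℓ-1} A_{x,x+1}` on `(ℂⁿ)^{⊗ 2ℓ}`; sites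
`-ℓ+1, …, ℓ` are encoded as positions `0, …, 2ℓ-1` (site `x` ↦ position `x + ℓ - 1`). -/
noncomputable def chainH (n ℓ : ℕ) (A : Matrix (Fin n × Fin n) (Fin n × Fin n) ℂ) :
    Matrix ((Fin (2 * ℓ)) → Fin n) ((Fin (2 * ℓ)) → Fin n) ℂ :=
  ∑ x ∈ Finset.range (2 * ℓ - 1),
    if h : x + 1 < 2 * ℓ then bondOp n ℓ A ⟨x, by omega⟩ ⟨x + 1, h⟩ else 0

/-- The staggered unitary `W = V ⊗ I ⊗ V ⊗ I ⊗ ⋯`: `V` acts at the positions of the odd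
sites `-ℓ+1, -ℓ+3, …` (even positions), the identity elsewhere. -/
noncomputable def staggeredW (n ℓ : ℕ) :
    Matrix ((Fin (2 * ℓ)) → Fin n) ((Fin (2 * ℓ)) → Fin n) ℂ :=
  fun σ τ => ∏ p : Fin (2 * ℓ),
    if Even (p : ℕ) then Vop n (σ p) (τ p) else (if σ p = τ p then 1 else 0)

section ProdMat
variable {n N : ℕ}

noncomputable def prodMat (m : Fin N → Matrix (Fin n) (Fin n) ℂ) :
    Matrix (Fin N → Fin n) (Fin N → Fin n) ℂ :=
  fun σ τ => ∏ p, m p (σ p) (τ p)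

lemma prodMat_mul (m m' : Fin N → Matrix (Fin n) (Fin n) ℂ) :
    prodMat m * prodMat m' = prodMat (fun p => m p * m' p) := by
  ext σ τ
  rw [Matrix.mul_apply]
  unfold prodMat
  simp_rw [← Finset.prod_mul_distrib]
  rw [← Fintype.prod_sum (fun p j => m p (σ p) j * m' p j (τ p))]
  simp [Matrix.mul_apply]

lemma prodMat_conjTranspose (m : Fin N → Matrix (Fin n) (Fin n) ℂ) :
    (prodMat m)ᴴ = prodMat (fun p => (m p)ᴴ) := by
  ext σ τ
  simp [prodMat, Matrix.conjTranspose_apply, map_prod]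

lemma prodMat_one : prodMat (fun _ : Fin N => (1 : Matrix (Fin n) (Fin n) ℂ)) = 1 := by
  ext σ τ
  simp only [prodMat, Matrix.one_apply]
  by_cases h : σ = τ
  · subst h; simp
  · rw [if_neg h]
    obtain ⟨p, hp⟩ := Function.ne_iff.mp h
    exact Finset.prod_eq_zero (Finset.mem_univ p) (by simp [hp])

end ProdMat

section SumUpdate
variable {n N : ℕ}

lemma sum_update_update (p q : Fin N) (hpq : p ≠ q) (τ : Fin N → Fin n)
    (F : (Fin N → Fin n) → ℂ)
    (hF : ∀ ρ : Fin N → Fin n, (∃ y, y ≠ p ∧ y ≠ q ∧ ρ y ≠ τ y) → F ρ = 0) :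
    ∑ ρ : Fin N → Fin n, F ρ
      = ∑ a : Fin n, ∑ b : Fin n,
          F (Function.update (Function.update τ p a) q b) := by
  classical
  set i : Fin n × Fin n → (Fin N → Fin n) :=
    fun ab => Function.update (Function.update τ p ab.1) q ab.2 with hi
  have hip : ∀ ab, i ab p = ab.1 := by
    intro ab; simp [hi, Function.update_of_ne hpq]
  have hiq : ∀ ab, i ab q = ab.2 := by
    intro ab; simp [hi]
  have hinj : Function.Injective i := by
    intro ab ab' h
    have h1 := congrFun h p
    have h2 := congrFun h q
    rw [hip, hip] at h1
    rw [hiq, hiq] at h2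
    exact Prod.ext h1 h2
  have h1 : ∑ ρ : Fin N → Fin n, F ρ = ∑ ρ ∈ Finset.univ.image i, F ρ := by
    symm
    apply Finset.sum_subset (Finset.subset_univ _)
    intro ρ _ hρ
    apply hF
    by_contra hc
    push_neg at hc
    apply hρ
    have : ρ = i (ρ p, ρ q) := by
      funext y
      by_cases hyq : y = q
      · subst hyq; rw [hiq]
      · by_cases hyp : y = p
        · subst hyp; rw [hip]
        · simp only [hi, Function.update_of_ne hyq, Function.update_of_ne hyp]
          exact hc y hyp hyq
    rw [this]
    exact Finset.mem_image_of_mem i (Finset.mem_univ _)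
  rw [h1, Finset.sum_image (fun a _ b _ h => hinj h), Fintype.sum_prod_type]

end SumUpdate

section Bond
variable {n N : ℕ}

lemma prod_split (p q : Fin N) (hpq : p ≠ q) (f : Fin N → ℂ) :
    ∏ y, f y = f p * (f q * ∏ y ∈ (Finset.univ.erase p).erase q, f y) := by
  rw [Finset.mul_prod_erase (Finset.univ.erase p) f
      (Finset.mem_erase.mpr ⟨hpq.symm, Finset.mem_univ q⟩),
    Finset.mul_prod_erase Finset.univ f (Finset.mem_univ p)]

lemma prodMat_bondOp_comm {n ℓ : ℕ} (m : Fin (2*ℓ) → Matrix (Fin n) (Fin n) ℂ)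
    (A A' : Matrix (Fin n × Fin n) (Fin n × Fin n) ℂ) (p q : Fin (2*ℓ)) (hpq : p ≠ q)
    (hA : (m p ⊗ₖ m q) * A' = A * (m p ⊗ₖ m q)) :
    prodMat m * bondOp n ℓ A' p q = bondOp n ℓ A p q * prodMat m := by
  classical
  have hqE : ∀ y : Fin (2*ℓ), y ≠ p → y ≠ q → y ∈ (Finset.univ.erase p).erase q :=
    fun y hyp hyq => Finset.mem_erase.mpr ⟨hyq, Finset.mem_erase.mpr ⟨hyp, Finset.mem_univ y⟩⟩
  have hEne : ∀ y : Fin (2*ℓ), y ∈ (Finset.univ.erase p).erase q → y ≠ p ∧ y ≠ q := by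
    intro y hy
    obtain ⟨h1, h2⟩ := Finset.mem_erase.mp hy
    exact ⟨(Finset.mem_erase.mp h2).1, h1⟩
  have hup : ∀ (τ : Fin (2*ℓ) → Fin n) (a b : Fin n),
      Function.update (Function.update τ p a) q b p = a := by
    intro τ a b; simp [Function.update_of_ne hpq]
  have huq : ∀ (τ : Fin (2*ℓ) → Fin n) (a b : Fin n),
      Function.update (Function.update τ p a) q b q = b := by
    intro τ a b; simp
  have huE : ∀ (τ : Fin (2*ℓ) → Fin n) (a b : Fin n) (y : Fin (2*ℓ)), y ≠ p → y ≠ q →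
      Function.update (Function.update τ p a) q b y = τ y := by
    intro τ a b y hyp hyq
    rw [Function.update_of_ne hyq, Function.update_of_ne hyp]
  ext σ τ
  rw [Matrix.mul_apply, Matrix.mul_apply]
  rw [sum_update_update p q hpq τ _ (by
    intro ρ ⟨y, hyp, hyq, hywne⟩
    have : bondOp n ℓ A' p q ρ τ = 0 := by
      unfold bondOp
      rw [Finset.prod_eq_zero (hqE y hyp hyq) (by simp [hywne]), mul_zero]
    rw [this, mul_zero])]
  rw [sum_update_update p q hpq σ (fun ρ => bondOp n ℓ A p q σ ρ * prodMat m ρ τ) (by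
    intro ρ ⟨y, hyp, hyq, hywne⟩
    have : bondOp n ℓ A p q σ ρ = 0 := by
      unfold bondOp
      rw [Finset.prod_eq_zero (hqE y hyp hyq) (by simp [Ne.symm hywne]), mul_zero]
    simp [this])]
  have key : ∀ a b : Fin n,
      prodMat m σ (Function.update (Function.update τ p a) q b) *
          bondOp n ℓ A' p q (Function.update (Function.update τ p a) q b) τ
        = (m p (σ p) a * m q (σ q) b * A' (a, b) (τ p, τ q)) *
            ∏ y ∈ (Finset.univ.erase p).erase q, m y (σ y) (τ y) := by
    intro a b
    unfold prodMat bondOp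
    rw [hup, huq]
    rw [prod_split p q hpq (fun y => m y (σ y) (Function.update (Function.update τ p a) q b y))]
    rw [hup, huq]
    have h1 : ∏ y ∈ (Finset.univ.erase p).erase q,
        m y (σ y) (Function.update (Function.update τ p a) q b y)
        = ∏ y ∈ (Finset.univ.erase p).erase q, m y (σ y) (τ y) :=
      Finset.prod_congr rfl (fun y hy => by
        obtain ⟨h1, h2⟩ := hEne y hy; rw [huE τ a b y h1 h2])
    have h2 : ∏ y ∈ (Finset.univ.erase p).erase q,
        (if Function.update (Function.update τ p a) q b y = τ y then (1:ℂ) else 0) = 1 :=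
      Finset.prod_eq_one (fun y hy => by
        obtain ⟨h1, h2⟩ := hEne y hy; rw [huE τ a b y h1 h2, if_pos rfl])
    rw [h1, h2, mul_one]
    ring
  have key2 : ∀ a b : Fin n,
      bondOp n ℓ A p q σ (Function.update (Function.update σ p a) q b) *
          prodMat m (Function.update (Function.update σ p a) q b) τ
        = (A (σ p, σ q) (a, b) * m p a (τ p) * m q b (τ q)) *
            ∏ y ∈ (Finset.univ.erase p).erase q, m y (σ y) (τ y) := by
    intro a b
    unfold prodMat bondOp
    rw [hup, huq]
    rw [prod_split p q hpq (fun y => m y (Function.update (Function.update σ p a) q b y) (τ y))]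
    rw [hup, huq]
    have h1 : ∏ y ∈ (Finset.univ.erase p).erase q,
        m y (Function.update (Function.update σ p a) q b y) (τ y)
        = ∏ y ∈ (Finset.univ.erase p).erase q, m y (σ y) (τ y) :=
      Finset.prod_congr rfl (fun y hy => by
        obtain ⟨h1, h2⟩ := hEne y hy; rw [huE σ a b y h1 h2])
    have h2 : ∏ y ∈ (Finset.univ.erase p).erase q,
        (if σ y = Function.update (Function.update σ p a) q b y then (1:ℂ) else 0) = 1 :=
      Finset.prod_eq_one (fun y hy => by
        obtain ⟨h1, h2⟩ := hEne y hy; rw [huE σ a b y h1 h2, if_pos rfl])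
    rw [h1, h2, mul_one]
    ring
  simp_rw [key, key2]
  have hent := congrFun (congrFun hA (σ p, σ q)) (τ p, τ q)
  simp only [Matrix.mul_apply, Fintype.sum_prod_type, Matrix.kroneckerMap_apply] at hent
  simp_rw [← Finset.sum_mul]
  congr 1
  simpa [mul_assoc] using hent
end Bond

section VFacts
variable {n : ℕ}

def frev {n : ℕ} (i : Fin n) : Fin n := ⟨n - 1 - (i : ℕ), by have := i.isLt; omega⟩

lemma frev_frev (i : Fin n) : frev (frev i) = i := by
  have := i.isLt; ext; simp only [frev]; omega

lemma frev_inj : Function.Injective (frev (n := n)) := by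
  intro a b h; rw [← frev_frev a, h, frev_frev]

lemma Vop_eq (i j : Fin n) : Vop n i j = if j = frev i then ((-1):ℂ)^(i:ℕ) else 0 := by
  have hi := i.isLt; have hj := j.isLt
  unfold Vop
  by_cases h : (i:ℕ) + (j:ℕ) = n - 1
  · rw [if_pos h, if_pos (by ext; simp only [frev]; omega)]
    congr 1
    omega
  · rw [if_neg h, if_neg (by intro hc; apply h; rw [hc]; simp only [frev]; omega)]

lemma eq_frev_comm (i j : Fin n) : (j = frev i) = (i = frev j) := by
  apply propext
  constructor
  · intro h; rw [h, frev_frev]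
  · intro h; rw [h, frev_frev]

lemma sum_Vop_right (i : Fin n) (f : Fin n → ℂ) :
    ∑ a, Vop n i a * f a = ((-1):ℂ)^(i:ℕ) * f (frev i) := by
  simp_rw [Vop_eq, ite_mul, zero_mul]
  rw [Finset.sum_ite_eq' Finset.univ (frev i) (fun a => ((-1):ℂ)^(i:ℕ) * f a)]
  simp

lemma sum_Vop_left (j : Fin n) (f : Fin n → ℂ) :
    ∑ a, f a * Vop n a j = f (frev j) * ((-1):ℂ)^((frev j : ℕ)) := by
  simp_rw [Vop_eq, eq_frev_comm (j := j), mul_ite, mul_zero]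
  rw [Finset.sum_ite_eq' Finset.univ (frev j) (fun a => f a * ((-1):ℂ)^(a:ℕ))]
  simp

lemma neg_one_pow_frev (hn : 1 ≤ n) (hne : Even n) (i : Fin n) :
    ((-1):ℂ)^((frev i : ℕ)) = -((-1):ℂ)^((i:ℕ)) := by
  have hi := i.isLt
  have h1 : (frev i : ℕ) + (i : ℕ) = n - 1 := by simp only [frev]; omega
  have h2 : Odd (n - 1) := Nat.Even.sub_odd hn hne odd_one
  have h3 : ((-1):ℂ)^((frev i : ℕ) + (i:ℕ)) = -1 := by rw [h1]; exact h2.neg_one_pow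
  have h4 : ((-1):ℂ)^((i:ℕ)) * ((-1):ℂ)^((i:ℕ)) = 1 := by
    rw [← pow_add, ← two_mul, pow_mul, neg_one_sq, one_pow]
  calc ((-1):ℂ)^((frev i : ℕ))
      = ((-1):ℂ)^((frev i : ℕ)) * (((-1):ℂ)^((i:ℕ)) * ((-1):ℂ)^((i:ℕ))) := by rw [h4, mul_one]
    _ = (((-1):ℂ)^((frev i : ℕ) + (i:ℕ))) * ((-1):ℂ)^((i:ℕ)) := by rw [← pow_add]; ring
    _ = -((-1):ℂ)^((i:ℕ)) := by rw [h3]; ring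

lemma Vop_conjTranspose (hn : 1 ≤ n) (hne : Even n) : (Vop n)ᴴ = -(Vop n) := by
  ext i j
  simp only [Matrix.conjTranspose_apply, Matrix.neg_apply, Vop_eq]
  by_cases h : i = frev j
  · have h' : j = frev i := by rw [h, frev_frev]
    rw [if_pos h, if_pos h', star_pow, star_neg, star_one, h, neg_one_pow_frev hn hne j, neg_neg]
  · have h' : ¬ (j = frev i) := fun hc => h (by rw [hc, frev_frev])
    rw [if_neg h, if_neg h', star_zero, neg_zero]

lemma Vop_mul_Vop (hn : 1 ≤ n) (hne : Even n) : Vop n * Vop n = -1 := by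
  ext i k
  rw [Matrix.mul_apply, sum_Vop_right, Vop_eq, frev_frev, neg_one_pow_frev hn hne,
    Matrix.neg_apply, Matrix.one_apply]
  by_cases h : k = i
  · subst h
    rw [if_pos rfl, if_pos rfl, mul_neg, ← pow_add, ← two_mul, pow_mul, neg_one_sq, one_pow]
  · rw [if_neg h, if_neg (fun hc => h hc.symm), mul_zero, neg_zero]

end VFacts

section Identities
variable {n : ℕ}

lemma transOpTilde_apply (a b k l : Fin n) :
    transOpTilde n (a, b) (k, l) = -(Vop n a l * Vop n b k) := by
  unfold transOpTilde
  rw [Matrix.neg_apply, Matrix.mul_apply, Fintype.sum_prod_type]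
  simp [transOp, Matrix.kroneckerMap_apply, ite_and, mul_ite, Finset.sum_ite_eq, Finset.sum_ite_eq']
variable {n : ℕ}

lemma neg_one_sq_pow (i : Fin n) : ((-1):ℂ)^(i:ℕ) * ((-1):ℂ)^(i:ℕ) = 1 := by
  rw [← pow_add, ← two_mul, pow_mul, neg_one_sq, one_pow]

lemma I1 (hn : 1 ≤ n) (hne : Even n) :
    (Vop n ⊗ₖ (1 : Matrix (Fin n) (Fin n) ℂ)) * transOpTilde n
      = transOp n * (Vop n ⊗ₖ (1 : Matrix (Fin n) (Fin n) ℂ)) := by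
  ext ⟨i,j⟩ ⟨k,l⟩
  rw [Matrix.mul_apply, Matrix.mul_apply, Fintype.sum_prod_type, Fintype.sum_prod_type]
  simp only [Matrix.kroneckerMap_apply, Matrix.one_apply, transOpTilde_apply, transOp,
    mul_ite, ite_mul, mul_zero, zero_mul, mul_one, one_mul, ite_and, Finset.sum_ite_irrel,
    Finset.sum_const_zero, Finset.sum_ite_eq, Finset.sum_ite_eq', Finset.mem_univ, if_true]
  rw [sum_Vop_right, Vop_eq, frev_frev]
  by_cases h : i = l
  · subst h
    simp only [if_pos rfl, Finset.sum_ite_eq, Finset.mem_univ, if_true,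
      neg_one_pow_frev hn hne]
    linear_combination (Vop n j k) * neg_one_sq_pow i
  · rw [if_neg (fun hc => h hc.symm)]
    simp [h]

lemma I2 (hn : 1 ≤ n) (hne : Even n) :
    ((1 : Matrix (Fin n) (Fin n) ℂ) ⊗ₖ Vop n) * transOpTilde n
      = transOp n * ((1 : Matrix (Fin n) (Fin n) ℂ) ⊗ₖ Vop n) := by
  ext ⟨i,j⟩ ⟨k,l⟩
  rw [Matrix.mul_apply, Matrix.mul_apply, Fintype.sum_prod_type, Fintype.sum_prod_type]
  simp only [Matrix.kroneckerMap_apply, Matrix.one_apply, transOpTilde_apply, transOp,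
    mul_ite, ite_mul, mul_zero, zero_mul, mul_one, one_mul, ite_and, Finset.sum_ite_irrel,
    Finset.sum_const_zero, Finset.sum_ite_eq, Finset.sum_ite_eq', Finset.mem_univ, if_true]
  rw [sum_Vop_right, Vop_eq (frev j) k, frev_frev]
  by_cases h : k = j
  · subst h
    rw [if_pos rfl, if_pos rfl, neg_one_pow_frev hn hne]
    linear_combination Vop n i l * neg_one_sq_pow k
  · rw [if_neg h, if_neg (fun hc => h hc.symm)]
    simp

lemma phiVec_eq (a b : Fin n) :
    phiVec n (a, b) = if b = frev a then ((-1):ℂ)^(b:ℕ) * ((Real.sqrt n : ℂ))⁻¹ else 0 := by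
  have ha := a.isLt; have hb := b.isLt
  unfold phiVec
  dsimp only
  by_cases h : (a:ℕ) + (b:ℕ) = n - 1
  · rw [if_pos h, if_pos (by ext; simp only [frev]; omega)]
    congr 2
    omega
  · rw [if_neg h, if_neg (by intro hc; apply h; rw [hc]; simp only [frev]; omega)]

lemma conj_sqrt_inv : (starRingEnd ℂ) (((Real.sqrt n : ℝ) : ℂ))⁻¹ = (((Real.sqrt n : ℝ)):ℂ)⁻¹ := by
  rw [map_inv₀, Complex.conj_ofReal]

lemma I3 (hn : 1 ≤ n) (hne : Even n) :
    (Vop n ⊗ₖ (1 : Matrix (Fin n) (Fin n) ℂ)) * QOp n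
      = Pproj n * (Vop n ⊗ₖ (1 : Matrix (Fin n) (Fin n) ℂ)) := by
  ext ⟨i,j⟩ ⟨k,l⟩
  rw [Matrix.mul_apply, Matrix.mul_apply, Fintype.sum_prod_type, Fintype.sum_prod_type]
  simp only [Matrix.kroneckerMap_apply, Matrix.one_apply, QOp, Pproj, psiVec, phiVec_eq,
    eq_frev_comm (j := l), _root_.map_mul, map_pow, map_neg, _root_.map_one, conj_sqrt_inv,
    apply_ite (starRingEnd ℂ), map_zero,
    mul_ite, ite_mul, mul_zero, zero_mul, mul_one, one_mul, ite_and, Finset.sum_ite_irrel,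
    Finset.sum_const_zero, Finset.sum_ite_eq, Finset.sum_ite_eq', Finset.mem_univ, if_true]
  rw [Vop_eq i j, Vop_eq (frev l) k, frev_frev]
  by_cases h1 : j = frev i
  · by_cases h2 : k = l
    · subst h1; subst h2
      simp only [eq_self_iff_true, if_true]
      rw [neg_one_pow_frev hn hne i, neg_one_pow_frev hn hne k]
      linear_combination (-((-1:ℂ)^(i : ℕ)) * ((Real.sqrt n : ℂ))⁻¹ * ((Real.sqrt n : ℂ))⁻¹) * neg_one_sq_pow k
    · simp [h1, h2]
  · simp [h1]

lemma I4 (hn : 1 ≤ n) (hne : Even n) :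
    ((1 : Matrix (Fin n) (Fin n) ℂ) ⊗ₖ Vop n) * QOp n
      = Pproj n * ((1 : Matrix (Fin n) (Fin n) ℂ) ⊗ₖ Vop n) := by
  ext ⟨i,j⟩ ⟨k,l⟩
  rw [Matrix.mul_apply, Matrix.mul_apply, Fintype.sum_prod_type, Fintype.sum_prod_type]
  simp only [Matrix.kroneckerMap_apply, Matrix.one_apply, QOp, Pproj, psiVec, phiVec_eq,
    _root_.map_mul, map_pow, map_neg, _root_.map_one, conj_sqrt_inv,
    apply_ite (starRingEnd ℂ), map_zero,
    mul_ite, ite_mul, mul_zero, zero_mul, mul_one, one_mul, ite_and, Finset.sum_ite_irrel,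
    Finset.sum_const_zero, Finset.sum_ite_eq, Finset.sum_ite_eq', Finset.mem_univ, if_true]
  rw [Vop_eq j i, Vop_eq (frev k) l, frev_frev]
  by_cases h1 : j = frev i
  · have h1' : i = frev j := by rw [h1, frev_frev]
    by_cases h2 : k = l
    · subst h2
      simp only [if_pos h1, if_pos h1', eq_self_iff_true, if_true]
      linear_combination (-((-1:ℂ)^(j : ℕ)) * ((Real.sqrt n : ℂ))⁻¹ * ((Real.sqrt n : ℂ))⁻¹) * neg_one_sq_pow (frev k)
    · rw [if_neg h2, if_neg (show ¬ (l = k) from fun hc => h2 hc.symm)]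
      simp
  · have h1' : ¬ (i = frev j) := fun hc => h1 (by rw [hc, frev_frev])
    simp [h1, h1']

noncomputable def stag (n ℓ : ℕ) : Fin (2*ℓ) → Matrix (Fin n) (Fin n) ℂ :=
  fun p => if Even (p:ℕ) then Vop n else 1

lemma staggeredW_eq (n ℓ : ℕ) : staggeredW n ℓ = prodMat (stag n ℓ) := by
  ext σ τ
  unfold staggeredW prodMat stag
  refine Finset.prod_congr rfl (fun p _ => ?_)
  rw [apply_ite (fun M : Matrix (Fin n) (Fin n) ℂ => M (σ p) (τ p)), Matrix.one_apply]

lemma stag_conjT (n ℓ : ℕ) (hn : 1 ≤ n) (hne : Even n) (p : Fin (2*ℓ)) :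
    stag n ℓ p * (stag n ℓ p)ᴴ = 1 ∧ (stag n ℓ p)ᴴ * stag n ℓ p = 1 := by
  unfold stag
  by_cases h : Even (p:ℕ) <;> simp only [h, if_true, if_false, reduceIte]
  · rw [Vop_conjTranspose hn hne]
    constructor
    · rw [Matrix.mul_neg, Vop_mul_Vop hn hne, neg_neg]
    · rw [Matrix.neg_mul, Vop_mul_Vop hn hne, neg_neg]
  · simp

lemma W_unitary (n ℓ : ℕ) (hn : 1 ≤ n) (hne : Even n) :
    staggeredW n ℓ * (staggeredW n ℓ)ᴴ = 1 ∧ (staggeredW n ℓ)ᴴ * staggeredW n ℓ = 1 := by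
  rw [staggeredW_eq, prodMat_conjTranspose, prodMat_mul, prodMat_mul]
  constructor
  · rw [show (fun p => stag n ℓ p * (stag n ℓ p)ᴴ) = fun _ => (1 : Matrix (Fin n) (Fin n) ℂ)
      from funext (fun p => (stag_conjT n ℓ hn hne p).1), prodMat_one]
  · rw [show (fun p => (stag n ℓ p)ᴴ * stag n ℓ p) = fun _ => (1 : Matrix (Fin n) (Fin n) ℂ)
      from funext (fun p => (stag_conjT n ℓ hn hne p).2), prodMat_one]

lemma bond_intertwine (n : ℕ) (hn : 1 ≤ n) (hne : Even n) (u v : ℝ) (ℓ : ℕ)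
    (x : ℕ) (h1 : x < 2*ℓ) (h2 : x + 1 < 2*ℓ) :
    (stag n ℓ ⟨x, h1⟩ ⊗ₖ stag n ℓ ⟨x+1, h2⟩) * ((u:ℂ) • transOpTilde n + (v:ℂ) • QOp n)
      = ((u:ℂ) • transOp n + (v:ℂ) • Pproj n) * (stag n ℓ ⟨x, h1⟩ ⊗ₖ stag n ℓ ⟨x+1, h2⟩) := by
  have hs1 : stag n ℓ ⟨x, h1⟩ = if Even x then Vop n else 1 := rfl
  have hs2 : stag n ℓ ⟨x+1, h2⟩ = if Even x then 1 else Vop n := by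
    unfold stag
    simp only [Nat.even_add_one]
    by_cases h : Even x <;> simp [h]
  rw [hs1, hs2]
  by_cases h : Even x <;> simp only [h, if_true, if_false, reduceIte] <;>
    rw [Matrix.mul_add, Matrix.add_mul, Matrix.mul_smul, Matrix.smul_mul,
      Matrix.mul_smul, Matrix.smul_mul]
  · rw [I1 hn hne, I3 hn hne]
  · rw [I2 hn hne, I4 hn hne]

lemma chain_intertwine (n : ℕ) (hn : 1 ≤ n) (hne : Even n) (u v : ℝ) (ℓ : ℕ) :
    staggeredW n ℓ * chainH n ℓ ((u:ℂ) • transOpTilde n + (v:ℂ) • QOp n)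
      = chainH n ℓ ((u:ℂ) • transOp n + (v:ℂ) • Pproj n) * staggeredW n ℓ := by
  unfold chainH
  rw [Matrix.mul_sum, Matrix.sum_mul]
  refine Finset.sum_congr rfl (fun x hx => ?_)
  have hx' : x + 1 < 2*ℓ := by
    have := Finset.mem_range.mp hx; omega
  rw [dif_pos hx', dif_pos hx', staggeredW_eq]
  exact prodMat_bondOp_comm (stag n ℓ) _ _ ⟨x, by omega⟩ ⟨x+1, hx'⟩
    (Fin.ne_of_val_ne (by simp)) (bond_intertwine n hn hne u v ℓ x (by omega) hx')

theorem staggered_unitary_equivalence' (n : ℕ) (hn : 2 ≤ n) (hne : Even n)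
    (u v : ℝ) (ℓ : ℕ) (hℓ : 1 ≤ ℓ) :
    (staggeredW n ℓ * (staggeredW n ℓ)ᴴ = 1 ∧ (staggeredW n ℓ)ᴴ * staggeredW n ℓ = 1) ∧
    staggeredW n ℓ * chainH n ℓ ((u : ℂ) • transOpTilde n + (v : ℂ) • QOp n) *
        (staggeredW n ℓ)ᴴ
      = chainH n ℓ ((u : ℂ) • transOp n + (v : ℂ) • Pproj n) ∧
    (∀ μ : ℂ,
      (∃ w : ((Fin (2 * ℓ)) → Fin n) → ℂ, w ≠ 0 ∧
        chainH n ℓ ((u : ℂ) • transOpTilde n + (v : ℂ) • QOp n) *ᵥ w = μ • w) ↔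
      (∃ w : ((Fin (2 * ℓ)) → Fin n) → ℂ, w ≠ 0 ∧
        chainH n ℓ ((u : ℂ) • transOp n + (v : ℂ) • Pproj n) *ᵥ w = μ • w)) := by
  have hn1 : 1 ≤ n := by omega
  obtain ⟨hu1, hu2⟩ := W_unitary n ℓ hn1 hne
  set W := staggeredW n ℓ
  set H' := chainH n ℓ ((u : ℂ) • transOpTilde n + (v : ℂ) • QOp n) with hH'
  set H := chainH n ℓ ((u : ℂ) • transOp n + (v : ℂ) • Pproj n) with hH
  have hint : W * H' = H * W := chain_intertwine n hn1 hne u v ℓ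
  have hconj : W * H' * Wᴴ = H := by
    rw [hint, Matrix.mul_assoc, hu1, Matrix.mul_one]
  refine ⟨⟨hu1, hu2⟩, hconj, fun μ => ?_⟩
  have hconj' : Wᴴ * H * W = H' := by
    rw [Matrix.mul_assoc, ← hint, ← Matrix.mul_assoc, hu2, Matrix.one_mul]
  have hint2 : H' * Wᴴ = Wᴴ * H := by
    have e : Wᴴ * (W * H') * Wᴴ = H' * Wᴴ := by
      rw [← Matrix.mul_assoc Wᴴ W H', hu2, Matrix.one_mul]
    rw [← e, hint, Matrix.mul_assoc Wᴴ (H*W) Wᴴ, Matrix.mul_assoc H W Wᴴ, hu1,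
      Matrix.mul_one]
  constructor
  · rintro ⟨w, hw0, hw⟩
    refine ⟨W *ᵥ w, ?_, ?_⟩
    · intro hc
      apply hw0
      have h0 : Wᴴ *ᵥ (W *ᵥ w) = 0 := by rw [hc, Matrix.mulVec_zero]
      rwa [Matrix.mulVec_mulVec, hu2, Matrix.one_mulVec] at h0
    · rw [Matrix.mulVec_mulVec, ← hint, ← Matrix.mulVec_mulVec, hw, Matrix.mulVec_smul]
  · rintro ⟨w, hw0, hw⟩
    refine ⟨Wᴴ *ᵥ w, ?_, ?_⟩
    · intro hc
      apply hw0
      have h0 : W *ᵥ (Wᴴ *ᵥ w) = 0 := by rw [hc, Matrix.mulVec_zero]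
      rwa [Matrix.mulVec_mulVec, hu1, Matrix.one_mulVec] at h0
    · rw [Matrix.mulVec_mulVec, hint2, ← Matrix.mulVec_mulVec, hw, Matrix.mulVec_smul]

/-- Appendix A, Proposition A.1 (`n` even): the staggered unitary `W` conjugates
`H'_ℓ = Σ (u T̃ + v Q)_{x,x+1}` into `H̃_ℓ = Σ (u T + v P)_{x,x+1}`; in particular the two
Hamiltonians are unitarily equivalent and have the same spectrum. -/
theorem staggered_unitary_equivalence (n : ℕ) (hn : 2 ≤ n) (hne : Even n)
    (u v : ℝ) (ℓ : ℕ) (hℓ : 1 ≤ ℓ) :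
    (staggeredW n ℓ * (staggeredW n ℓ)ᴴ = 1 ∧ (staggeredW n ℓ)ᴴ * staggeredW n ℓ = 1) ∧
    staggeredW n ℓ * chainH n ℓ ((u : ℂ) • transOpTilde n + (v : ℂ) • QOp n) *
        (staggeredW n ℓ)ᴴ
      = chainH n ℓ ((u : ℂ) • transOp n + (v : ℂ) • Pproj n) ∧
    (∀ μ : ℂ,
      (∃ w : ((Fin (2 * ℓ)) → Fin n) → ℂ, w ≠ 0 ∧
        chainH n ℓ ((u : ℂ) • transOpTilde n + (v : ℂ) • QOp n) *ᵥ w = μ • w) ↔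
      (∃ w : ((Fin (2 * ℓ)) → Fin n) → ℂ, w ≠ 0 ∧
        chainH n ℓ ((u : ℂ) • transOp n + (v : ℂ) • Pproj n) *ᵥ w = μ • w)) := by
  exact staggered_unitary_equivalence' n hn hne u v ℓ hℓ
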